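/- For any torsion-free group G, the following are equivalent: (1) every nonempty finite subset of G has an extreme point (G is weakly diffuse); (2) every finite subset A of G with |A| > 1 has at least two extreme points (G is diffuse). -/

import Mathlib

/-- `a` is an extreme point of `A` if `a ∈ A` and `a⁻¹A ∩ A⁻¹a = {1}`. -/
def IsExtremePoint {G : Type*} [Group G] (A : Set G) (a : G) : Prop :=
  a ∈ A ∧ {h : G | ∃ x ∈ A, h = a⁻¹ * x} ∩ {h : G | ∃ y ∈ A, h = y⁻¹ * a} = {1}

/-- A group is weakly diffuse if every nonempty finite subset has an extreme point. -/
def WeaklyDiffuse (G : Type*) [Group G] : Prop :=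
  ∀ A : Set G, A.Finite → A.Nonempty → ∃ a, IsExtremePoint A a

/-- A group is diffuse if every finite subset with more than one element has
at least two extreme points. -/
def Diffuse (G : Type*) [Group G] : Prop :=
  ∀ A : Set G, A.Finite → 1 < A.ncard →
    ∃ a b, a ≠ b ∧ IsExtremePoint A a ∧ IsExtremePoint A b

/-- A monoid is torsion-free if no nontrivial element has finite order
(the definition `Monoid.IsTorsionFree` of the older Mathlib). -/
def Monoid.IsTorsionFree (G : Type*) [Monoid G] : Prop :=
  ∀ g : G, g ≠ 1 → ¬IsOfFinOrder g

lemma isExtremePoint_iff {G : Type*} [Group G] {A : Set G} {a : G} :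
    IsExtremePoint A a ↔ a ∈ A ∧ ∀ x ∈ A, ∀ y ∈ A, a⁻¹ * x = y⁻¹ * a → x = a ∧ y = a := by
  unfold IsExtremePoint
  constructor
  · rintro ⟨haA, hset⟩
    refine ⟨haA, fun x hx y hy hxy => ?_⟩
    have h1 : a⁻¹ * x ∈ ({1} : Set G) := by
      rw [← hset]; exact ⟨⟨x, hx, rfl⟩, ⟨y, hy, hxy⟩⟩
    have h2 : a⁻¹ * x = 1 := h1
    have h3 : y⁻¹ * a = 1 := hxy ▸ h2
    exact ⟨(inv_mul_eq_one.mp h2).symm, inv_mul_eq_one.mp h3⟩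
  · rintro ⟨haA, hcond⟩
    refine ⟨haA, ?_⟩
    ext h
    simp only [Set.mem_inter_iff, Set.mem_setOf_eq, Set.mem_singleton_iff]
    constructor
    · rintro ⟨⟨x, hx, rfl⟩, ⟨y, hy, hxy⟩⟩
      obtain ⟨h1, h2⟩ := hcond x hx y hy hxy
      rw [h1, inv_mul_cancel]
    · rintro rfl
      exact ⟨⟨a, haA, (inv_mul_cancel a).symm⟩, ⟨a, haA, (inv_mul_cancel a).symm⟩⟩

/-- For a torsion-free group, weakly diffuse is equivalent to diffuse. -/
theorem weaklyDiffuse_iff_diffuse {G : Type*} [Group G]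
    (hG : Monoid.IsTorsionFree G) : WeaklyDiffuse G ↔ Diffuse G := by
  constructor
  · -- hard direction: weakly diffuse → diffuse
    intro hwd A hA hcard
    have hne : A.Nonempty := by
      rcases A.eq_empty_or_nonempty with h | h
      · rw [h] at hcard; simp at hcard
      · exact h
    obtain ⟨a, ha⟩ := hwd A hA hne
    have haA : a ∈ A := ha.1
    -- there is some c ∈ A with c ≠ a
    obtain ⟨c, hcA, hca⟩ : ∃ c ∈ A, c ≠ a := by
      by_contra hcon
      push_neg at hcon
      have : A ⊆ {a} := fun x hx => hcon x hx
      have : A.ncard ≤ 1 := le_trans (Set.ncard_le_ncard this (Set.finite_singleton a))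
        (by simp)
      omega
    -- the symmetric set B = a⁻¹A ∪ A⁻¹a
    set B : Set G := ((fun x => a⁻¹ * x) '' A) ∪ ((fun x => x⁻¹ * a) '' A) with hBdef
    have hBfin : B.Finite := (hA.image _).union (hA.image _)
    have hBne : B.Nonempty := ⟨a⁻¹ * a, Or.inl ⟨a, haA, rfl⟩⟩
    obtain ⟨b, hb⟩ := hwd B hBfin hBne
    rw [isExtremePoint_iff] at hb
    obtain ⟨hbB, hbcond⟩ := hb
    -- membership helpers
    have memL : ∀ x ∈ A, a⁻¹ * x ∈ B := fun x hx => Or.inl ⟨x, hx, rfl⟩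
    have memR : ∀ x ∈ A, x⁻¹ * a ∈ B := fun x hx => Or.inr ⟨x, hx, rfl⟩
    -- b ≠ 1
    have hb1 : b ≠ 1 := by
      rintro rfl
      have h1 : (1 : G)⁻¹ * (a⁻¹ * c) = (c⁻¹ * a)⁻¹ * 1 := by group
      obtain ⟨h2, -⟩ := hbcond (a⁻¹ * c) (memL c hcA) (c⁻¹ * a) (memR c hcA) h1
      exact hca (inv_mul_eq_one.mp h2).symm
    rcases hbB with ⟨x₀, hx₀A, hx₀⟩ | ⟨x₀, hx₀A, hx₀⟩
    · -- b = a⁻¹ * x₀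
      have hb' : b = a⁻¹ * x₀ := hx₀.symm
      have hx₀a : x₀ ≠ a := by
        rintro rfl
        exact hb1 (by rw [hb', inv_mul_cancel])
      refine ⟨a, x₀, fun h => hx₀a h.symm, ha, ?_⟩
      rw [isExtremePoint_iff]
      refine ⟨hx₀A, fun x hx y hy hxy => ?_⟩
      have key : b⁻¹ * (a⁻¹ * x) = (a⁻¹ * y)⁻¹ * b := by
        rw [hb']
        calc (a⁻¹ * x₀)⁻¹ * (a⁻¹ * x) = x₀⁻¹ * x := by group
          _ = y⁻¹ * x₀ := hxy
          _ = (a⁻¹ * y)⁻¹ * (a⁻¹ * x₀) := by group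
      obtain ⟨h2, h3⟩ := hbcond (a⁻¹ * x) (memL x hx) (a⁻¹ * y) (memL y hy) key
      rw [hb'] at h2 h3
      exact ⟨mul_left_cancel h2, mul_left_cancel h3⟩
    · -- b = x₀⁻¹ * a
      have hb' : b = x₀⁻¹ * a := hx₀.symm
      have hx₀a : x₀ ≠ a := by
        rintro rfl
        exact hb1 (by rw [hb', inv_mul_cancel])
      refine ⟨a, x₀, fun h => hx₀a h.symm, ha, ?_⟩
      rw [isExtremePoint_iff]
      refine ⟨hx₀A, fun x hx y hy hxy => ?_⟩
      have hx' : x = x₀ * (y⁻¹ * x₀) := by rw [← hxy]; group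
      have key : b⁻¹ * (y⁻¹ * a) = (x⁻¹ * a)⁻¹ * b := by
        rw [hb', hx']
        group
      obtain ⟨h2, h3⟩ := hbcond (y⁻¹ * a) (memR y hy) (x⁻¹ * a) (memR x hx) key
      rw [hb'] at h2 h3
      have hy₀ : y = x₀ := by
        have := mul_right_cancel h2
        exact inv_injective this
      have hx₀' : x = x₀ := by
        have := mul_right_cancel h3
        exact inv_injective this
      exact ⟨hx₀', hy₀⟩
  · -- easy direction: diffuse → weakly diffuse
    intro hd A hA hne
    by_cases hcard : 1 < A.ncard
    · obtain ⟨x, y, -, hx, -⟩ := hd A hA hcard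
      exact ⟨x, hx⟩
    · -- A is a singleton
      obtain ⟨a, haA⟩ := hne
      refine ⟨a, isExtremePoint_iff.mpr ⟨haA, fun x hx y hy hxy => ?_⟩⟩
      have h1 : A.ncard = 1 := by
        have : 0 < A.ncard := (Set.ncard_pos hA).mpr ⟨a, haA⟩
        omega
      obtain ⟨z, hz⟩ := Set.ncard_eq_one.mp h1
      rw [hz] at hx hy haA
      simp only [Set.mem_singleton_iff] at hx hy haA
      exact ⟨hx.trans haA.symm, hy.trans haA.symm⟩
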